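/- Under the assumptions of Theorem 2.3 (the scalar version), one has the decay estimate g(t) ≤ C₂ exp(∫₀ᵗ γ(ξ)dξ) for all t ≥ 0 with C₂ = M₃^{1/(p−1)} − ω. Consequently, if ∫₀ᵗ γ(ξ)dξ → −∞ as t → ∞, then g(t) → 0 as t → ∞. -/

import Mathlib

open MeasureTheory intervalIntegral Real Filter Set Topology

lemma ftc_chain {u U : ℝ → ℝ} {a b : ℝ} (hab : a ≤ b)
    (hu : IntegrableOn u (Icc a b))
    (hU : ∀ t ∈ Icc a b, U t = U a + ∫ s in a..t, u s)
    {Φ Φ' : ℝ → ℝ} {O : Set ℝ} (hO : IsOpen O)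
    (hΦ : ∀ x ∈ O, HasDerivAt Φ (Φ' x) x) (hΦ'c : ContinuousOn Φ' O)
    (hrange : ∀ t ∈ Icc a b, U t ∈ O) :
    Φ (U b) = Φ (U a) + ∫ s in a..b, Φ' (U s) * u s := by
  classical
  set w : ℝ → ℝ := (Icc a b).indicator u with hw_def
  have hw : Integrable w := (integrable_indicator_iff measurableSet_Icc).2 hu
  have hwu : ∀ t ∈ Icc a b, ∫ s in a..t, u s = ∫ s in a..t, w s := by
    intro t ht
    apply intervalIntegral.integral_congr
    intro s hs
    rw [uIcc_of_le ht.1] at hs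
    have hmem : s ∈ Icc a b := ⟨hs.1, hs.2.trans ht.2⟩
    show u s = w s
    simp [hw_def, Set.indicator_of_mem hmem]
  have hprim : ContinuousOn (fun x => ∫ s in a..x, u s) (Icc a b) := by
    have h' : IntegrableOn u (uIcc a b) := by rwa [uIcc_of_le hab]
    have := intervalIntegral.continuousOn_primitive_interval (μ := volume) h'
    rwa [uIcc_of_le hab] at this
  have hUcont : ContinuousOn U (Icc a b) :=
    (continuousOn_const.add hprim).congr fun t ht => hU t ht
  have hK : IsCompact (U '' Icc a b) := isCompact_Icc.image_of_continuousOn hUcont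
  have hKO : U '' Icc a b ⊆ O := by rintro _ ⟨t, ht, rfl⟩; exact hrange t ht
  obtain ⟨ε₀, hε₀, hthick⟩ := hK.exists_thickening_subset_open hO hKO
  set K' := Metric.cthickening (ε₀ / 2) (U '' Icc a b) with hK'def
  have hK'c : IsCompact K' := hK.cthickening
  have hK'O : K' ⊆ O :=
    (Metric.cthickening_subset_thickening' hε₀ (by linarith) _).trans hthick
  have hKK' : U '' Icc a b ⊆ K' := Metric.self_subset_cthickening _
  obtain ⟨C, hC⟩ := hK'c.exists_bound_of_continuousOn (hΦ'c.mono hK'O)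
  have hUC := hK'c.uniformContinuousOn_of_continuous (hΦ'c.mono hK'O)
  rw [Metric.uniformContinuousOn_iff] at hUC
  have hΦcont : ContinuousAt Φ (U b) := (hΦ _ (hrange b (right_mem_Icc.2 hab))).continuousAt
  set I₁ := ∫ x, |w x| with hI₁
  have hI₁0 : 0 ≤ I₁ := integral_nonneg fun x => abs_nonneg _
  -- interval integrability of Φ'(U) * u and Φ'(U) * w
  have hΦ'U : ContinuousOn (fun s => Φ' (U s)) (Icc a b) :=
    hΦ'c.comp hUcont fun t ht => hrange t ht
  have intW : IntervalIntegrable (fun s => Φ' (U s) * w s) volume a b := by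
    have h : IntegrableOn (fun s => Φ' (U s) * w s) (Icc a b) :=
      IntegrableOn.continuousOn_mul hΦ'U hw.integrableOn isCompact_Icc
    rw [← uIcc_of_le hab] at h
    exact h.intervalIntegrable
  have intU : IntervalIntegrable (fun s => Φ' (U s) * u s) volume a b := by
    have h : IntegrableOn (fun s => Φ' (U s) * u s) (Icc a b) :=
      IntegrableOn.continuousOn_mul hΦ'U hu isCompact_Icc
    rw [← uIcc_of_le hab] at h
    exact h.intervalIntegrable
  have hUW : ∫ s in a..b, Φ' (U s) * u s = ∫ s in a..b, Φ' (U s) * w s := by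
    apply intervalIntegral.integral_congr
    intro s hs
    rw [uIcc_of_le hab] at hs
    show Φ' (U s) * u s = Φ' (U s) * w s
    simp [hw_def, Set.indicator_of_mem hs]
  apply eq_of_forall_dist_le
  intro ε hε
  rw [Real.dist_eq]
  obtain ⟨δ₁, hδ₁, hδ₁'⟩ := Metric.continuousAt_iff.1 hΦcont (ε / 3) (by linarith)
  obtain ⟨δ₂, hδ₂, hδ₂'⟩ := hUC (ε / (3 * (I₁ + 1))) (by positivity)
  set Cb := |C| + 1 with hCb
  have hCb0 : 0 < Cb := by positivity
  set η := min (min (ε₀ / 2) 1) (min (δ₁ / 2) (min (δ₂ / 2) (ε / (3 * Cb)))) with hη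
  have hηpos : 0 < η := by
    refine lt_min (lt_min (by linarith) one_pos) (lt_min (by linarith) (lt_min (by linarith) (by positivity)))
  have hη1 : η ≤ ε₀ / 2 := le_trans (min_le_left _ _) (min_le_left _ _)
  have hη2 : η ≤ 1 := le_trans (min_le_left _ _) (min_le_right _ _)
  have hη3 : η ≤ δ₁ / 2 := le_trans (min_le_right _ _) (min_le_left _ _)
  have hη4 : η ≤ δ₂ / 2 := le_trans (min_le_right _ _) (le_trans (min_le_right _ _) (min_le_left _ _))
  have hη5 : η ≤ ε / (3 * Cb) := le_trans (min_le_right _ _) (le_trans (min_le_right _ _) (min_le_right _ _))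
  obtain ⟨v, hvsupp, hvL1, hvcont, hvint⟩ := hw.exists_hasCompactSupport_integral_sub_le hηpos
  have hvL1' : ∫ x, |w x - v x| ≤ η := by
    simpa only [Real.norm_eq_abs] using hvL1
  set V : ℝ → ℝ := fun t => U a + ∫ s in a..t, v s with hVdef
  have hVd : ∀ t : ℝ, HasDerivAt V (v t) t := fun t =>
    ((hvcont.integral_hasStrictDerivAt a t).hasDerivAt).const_add (U a)
  have hVcont : Continuous V :=
    continuous_const.add (intervalIntegral.continuous_primitive (fun _ _ => hvint.intervalIntegrable) a)
  have hVa : V a = U a := by simp [hVdef]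
  have hVU : ∀ t ∈ Icc a b, |V t - U t| ≤ η := by
    intro t ht
    have h2 : V t - U t = ∫ s in a..t, (v s - w s) := by
      rw [hU t ht, hwu t ht, hVdef]
      rw [intervalIntegral.integral_sub hvint.intervalIntegrable hw.intervalIntegrable]
      ring
    rw [h2]
    calc |∫ s in a..t, (v s - w s)| ≤ ∫ s in a..t, |v s - w s| :=
          intervalIntegral.abs_integral_le_integral_abs ht.1
      _ ≤ ∫ x, |v x - w x| := by
          rw [intervalIntegral.integral_of_le ht.1]
          exact setIntegral_le_integral (hvint.sub hw).abs
            (Filter.Eventually.of_forall fun x => abs_nonneg _)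
      _ = ∫ x, |w x - v x| := by simp_rw [abs_sub_comm]
      _ ≤ η := hvL1'
  have hVK' : ∀ t ∈ Icc a b, V t ∈ K' := by
    intro t ht
    apply Metric.closedBall_subset_cthickening (mem_image_of_mem U ht)
    rw [Metric.mem_closedBall, Real.dist_eq]
    exact (hVU t ht).trans (by linarith)
  -- FTC for V
  have hftc : ∫ s in a..b, Φ' (V s) * v s = Φ (V b) - Φ (V a) := by
    apply intervalIntegral.integral_eq_sub_of_hasDerivAt
    · intro t ht
      rw [uIcc_of_le hab] at ht
      exact (hΦ (V t) (hK'O (hVK' t ht))).comp t (hVd t)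
    · apply ContinuousOn.intervalIntegrable
      apply ContinuousOn.mul _ hvcont.continuousOn
      rw [uIcc_of_le hab]
      exact hΦ'c.comp hVcont.continuousOn fun t ht => hK'O (hVK' t ht)
  -- estimates
  have hintv : ∫ x, |v x| ≤ I₁ + η := by
    calc ∫ x, |v x| ≤ ∫ x, (|v x - w x| + |w x|) := by
          apply integral_mono hvint.abs ((hvint.sub hw).abs.add hw.abs)
          intro x
          simpa using abs_add_le (v x - w x) (w x)
      _ = (∫ x, |v x - w x|) + ∫ x, |w x| := integral_add (hvint.sub hw).abs hw.abs
      _ ≤ η + I₁ := by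
          have := hvL1'
          simp_rw [abs_sub_comm (w _) (v _)] at this
          linarith [this]
      _ = I₁ + η := by ring
  set ε₂ := ε / (3 * (I₁ + 1)) with hε₂
  have hε₂0 : 0 ≤ ε₂ := by positivity
  have hptV : ∀ s ∈ Icc a b, |Φ' (V s) - Φ' (U s)| ≤ ε₂ := by
    intro s hs
    have h2 : dist (V s) (U s) < δ₂ := by
      rw [Real.dist_eq]; exact lt_of_le_of_lt (hVU s hs) (by linarith)
    have := hδ₂' (V s) (hVK' s hs) (U s) (hKK' (mem_image_of_mem U hs)) h2
    rw [Real.dist_eq] at this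
    exact this.le
  have hptU : ∀ s ∈ Icc a b, |Φ' (U s)| ≤ Cb := by
    intro s hs
    have := hC (U s) (hKK' (mem_image_of_mem U hs))
    rw [Real.norm_eq_abs] at this
    have h3 : C ≤ Cb := by
      rw [hCb]; linarith [le_abs_self C]
    exact this.trans h3
  have intVv : IntervalIntegrable (fun s => Φ' (V s) * v s) volume a b := by
    apply ContinuousOn.intervalIntegrable
    apply ContinuousOn.mul _ hvcont.continuousOn
    rw [uIcc_of_le hab]
    exact hΦ'c.comp hVcont.continuousOn fun t ht => hK'O (hVK' t ht)
  have intAbsDiff : IntervalIntegrable (fun s => |v s - w s|) volume a b :=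
    (hvint.sub hw).abs.intervalIntegrable
  have intAbsV : IntervalIntegrable (fun s => |v s|) volume a b :=
    (hvcont.abs).intervalIntegrable a b
  have hvab : ∫ s in a..b, |v s| ≤ I₁ + 1 := by
    have h1 : ∫ s in a..b, |v s| ≤ ∫ x, |v x| := by
      rw [intervalIntegral.integral_of_le hab]
      exact setIntegral_le_integral hvint.abs (Filter.Eventually.of_forall fun x => abs_nonneg _)
    linarith
  have hvwab : ∫ s in a..b, |v s - w s| ≤ η := by
    have h1 : ∫ s in a..b, |v s - w s| ≤ ∫ x, |v x - w x| := by
      rw [intervalIntegral.integral_of_le hab]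
      exact setIntegral_le_integral (hvint.sub hw).abs
        (Filter.Eventually.of_forall fun x => abs_nonneg _)
    have h2 : (∫ x, |v x - w x|) = ∫ x, |w x - v x| := by
      congr 1; funext x; exact abs_sub_comm _ _
    linarith
  have hY : |(∫ s in a..b, Φ' (V s) * v s) - ∫ s in a..b, Φ' (U s) * w s| ≤ ε / 3 + ε / 3 := by
    rw [← intervalIntegral.integral_sub intVv intW]
    have step1 : |∫ s in a..b, (Φ' (V s) * v s - Φ' (U s) * w s)|
        ≤ ∫ s in a..b, |Φ' (V s) * v s - Φ' (U s) * w s| :=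
      intervalIntegral.abs_integral_le_integral_abs hab
    have step2 : ∫ s in a..b, |Φ' (V s) * v s - Φ' (U s) * w s|
        ≤ ∫ s in a..b, (ε₂ * |v s| + Cb * |v s - w s|) := by
      apply intervalIntegral.integral_mono_on hab (intVv.sub intW).abs
        ((intAbsV.const_mul ε₂).add (intAbsDiff.const_mul Cb))
      intro s hs
      have hdec : Φ' (V s) * v s - Φ' (U s) * w s
          = (Φ' (V s) - Φ' (U s)) * v s + Φ' (U s) * (v s - w s) := by ring
      rw [hdec]
      calc |(Φ' (V s) - Φ' (U s)) * v s + Φ' (U s) * (v s - w s)|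
          ≤ |(Φ' (V s) - Φ' (U s)) * v s| + |Φ' (U s) * (v s - w s)| := abs_add_le _ _
        _ = |Φ' (V s) - Φ' (U s)| * |v s| + |Φ' (U s)| * |v s - w s| := by
            rw [abs_mul, abs_mul]
        _ ≤ ε₂ * |v s| + Cb * |v s - w s| := by
            gcongr
            exacts [hptV s hs, hptU s hs]
    have step3 : ∫ s in a..b, (ε₂ * |v s| + Cb * |v s - w s|)
        = ε₂ * (∫ s in a..b, |v s|) + Cb * ∫ s in a..b, |v s - w s| := by
      rw [intervalIntegral.integral_add (intAbsV.const_mul ε₂) (intAbsDiff.const_mul Cb),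
        intervalIntegral.integral_const_mul, intervalIntegral.integral_const_mul]
    have step4 : ε₂ * (∫ s in a..b, |v s|) ≤ ε / 3 := by
      have h1 : ε₂ * (∫ s in a..b, |v s|) ≤ ε₂ * (I₁ + 1) := by
        apply mul_le_mul_of_nonneg_left hvab hε₂0
      have h2 : ε₂ * (I₁ + 1) = ε / 3 := by
        rw [hε₂]; field_simp
      linarith
    have step5 : Cb * (∫ s in a..b, |v s - w s|) ≤ ε / 3 := by
      have h1 : Cb * (∫ s in a..b, |v s - w s|) ≤ Cb * η :=
        mul_le_mul_of_nonneg_left hvwab hCb0.le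
      have h2 : Cb * η ≤ Cb * (ε / (3 * Cb)) := mul_le_mul_of_nonneg_left hη5 hCb0.le
      have h3 : Cb * (ε / (3 * Cb)) = ε / 3 := by field_simp
      exact le_trans h1 (le_trans h2 (le_of_eq h3))
    have hsum : (ε₂ * ∫ s in a..b, |v s|) + Cb * ∫ s in a..b, |v s - w s| ≤ ε / 3 + ε / 3 :=
      add_le_add step4 step5
    exact step1.trans (le_trans (step2.trans (le_of_eq step3)) hsum)
  have hX : |Φ (U b) - Φ (V b)| ≤ ε / 3 := by
    have h2 : dist (V b) (U b) < δ₁ := by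
      rw [Real.dist_eq]
      exact lt_of_le_of_lt (hVU b (right_mem_Icc.2 hab)) (by linarith)
    have := hδ₁' h2
    rw [Real.dist_eq] at this
    rw [abs_sub_comm]
    exact this.le
  have hVb : Φ (V b) = Φ (U a) + ∫ s in a..b, Φ' (V s) * v s := by
    rw [hVa] at hftc; linarith
  have hdecomp : Φ (U b) - (Φ (U a) + ∫ s in a..b, Φ' (U s) * u s)
      = (Φ (U b) - Φ (V b))
        + ((∫ s in a..b, Φ' (V s) * v s) - ∫ s in a..b, Φ' (U s) * w s) := by
    rw [hUW, hVb]; ring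
  calc |Φ (U b) - (Φ (U a) + ∫ s in a..b, Φ' (U s) * u s)|
      = |(Φ (U b) - Φ (V b))
        + ((∫ s in a..b, Φ' (V s) * v s) - ∫ s in a..b, Φ' (U s) * w s)| := by rw [hdecomp]
    _ ≤ |Φ (U b) - Φ (V b)|
        + |(∫ s in a..b, Φ' (V s) * v s) - ∫ s in a..b, Φ' (U s) * w s| := abs_add_le _ _
    _ ≤ ε / 3 + (ε / 3 + ε / 3) := add_le_add hX hY
    _ = ε := by ring

lemma my_ii {f : ℝ → ℝ} (hf : LocallyIntegrable f) (a b : ℝ) :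
    IntervalIntegrable f volume a b :=
  (hf.integrableOn_isCompact isCompact_uIcc).intervalIntegrable

lemma my_ii_mul_cont {f c : ℝ → ℝ} (hf : LocallyIntegrable f) (hc : Continuous c) (a b : ℝ) :
    IntervalIntegrable (fun x => f x * c x) volume a b :=
  ((hf.integrableOn_isCompact isCompact_uIcc).mul_continuousOn hc.continuousOn
    isCompact_uIcc).intervalIntegrable

lemma my_li_mul_cont {f c : ℝ → ℝ} (hf : LocallyIntegrable f) (hc : Continuous c) :
    LocallyIntegrable (fun x => f x * c x) := by
  rw [← MeasureTheory.locallyIntegrableOn_univ]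
  exact (hf.locallyIntegrableOn Set.univ).mul_continuousOn hc.continuousOn
    isOpen_univ.isLocallyClosed

lemma my_add_rpow {x y q : ℝ} (hx : 0 ≤ x) (hy : 0 ≤ y) (hq : 1 ≤ q) :
    x ^ q + y ^ q ≤ (x + y) ^ q := by
  have h := NNReal.add_rpow_le_rpow_add x.toNNReal y.toNNReal hq
  have h2 := NNReal.coe_le_coe.2 h
  push_cast at h2
  rwa [Real.coe_toNNReal x hx, Real.coe_toNNReal y hy] at h2

set_option maxHeartbeats 4000000 in
theorem decay_estimate_thm23
    (g γ α β ν : ℝ → ℝ) (p ω : ℝ) (hp : 1 < p) (hω : 0 < ω)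
    (hγ : LocallyIntegrable γ) (hα : LocallyIntegrable α) (hβ : LocallyIntegrable β)
    (hαpos : ∀ t, 0 ≤ α t) (hβpos : ∀ t, 0 ≤ β t)
    (hg0 : ∀ t ≥ 0, 0 ≤ g t) (hgdiff : Differentiable ℝ g)
    (hineq : ∀ t ≥ 0, deriv g t ≤ γ t * g t + α t * g t ^ p + β t)
    (hν : ∀ t, ν t = Real.exp (-∫ ξ in (0:ℝ)..t, γ ξ))
    (hsmall : ∀ t ≥ 0, β t * ν t ^ p ≤ ω ^ p * α t)
    (hαν : IntegrableOn (fun ξ => α ξ / ν ξ ^ (p - 1)) (Set.Ioi (0:ℝ)))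
    (hinit : (p - 1) * (∫ ξ in Set.Ioi (0:ℝ), α ξ / ν ξ ^ (p - 1)) < (g 0 + ω) ^ (1 - p)) :
    (∀ t ≥ 0, g t ≤
      ((1 / ((g 0 + ω) ^ (1 - p) - (p - 1) * ∫ ξ in Set.Ioi (0:ℝ), α ξ / ν ξ ^ (p - 1)))
        ^ (1 / (p - 1)) - ω) * Real.exp (∫ ξ in (0:ℝ)..t, γ ξ)) ∧
    (Tendsto (fun t => ∫ ξ in (0:ℝ)..t, γ ξ) atTop atBot →
      Tendsto g atTop (nhds 0)) := by
  have hp1 : (0:ℝ) < p - 1 := by linarith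
  have hppos : (0:ℝ) < p := by linarith
  set F : ℝ → ℝ := fun t => ∫ ξ in (0:ℝ)..t, γ ξ with hFdef
  have hiiγ : ∀ a b : ℝ, IntervalIntegrable γ volume a b := my_ii hγ
  have hFcont : Continuous F := intervalIntegral.continuous_primitive hiiγ 0
  set E : ℝ → ℝ := fun t => Real.exp (F t) with hEdef
  have hEcont : Continuous E := Real.continuous_exp.comp hFcont
  have hEpos : ∀ t, 0 < E t := fun t => Real.exp_pos _
  set a1 : ℝ → ℝ := fun ξ => α ξ * Real.exp ((p - 1) * F ξ) with ha1def
  have hexp_rpow : ∀ x q : ℝ, Real.exp x ^ q = Real.exp (x * q) := by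
    intro x q
    rw [Real.rpow_def_of_pos (Real.exp_pos _), Real.log_exp]
  have ha1eq : (fun ξ => α ξ / ν ξ ^ (p - 1)) = a1 := by
    funext ξ
    rw [hν ξ, hexp_rpow, div_eq_mul_inv, ← Real.exp_neg]
    have harg : -(-F ξ * (p - 1)) = (p - 1) * F ξ := by ring
    rw [harg]
  have ha1nn : ∀ ξ, 0 ≤ a1 ξ := fun ξ => mul_nonneg (hαpos ξ) (Real.exp_pos _).le
  have hiia1 : ∀ a b : ℝ, IntervalIntegrable a1 volume a b :=
    my_ii_mul_cont hα (Real.continuous_exp.comp (continuous_const.mul hFcont))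
  set I : ℝ := ∫ ξ in Set.Ioi (0:ℝ), α ξ / ν ξ ^ (p - 1) with hIdef
  have hIa1 : I = ∫ ξ in Set.Ioi (0:ℝ), a1 ξ := by rw [hIdef, ha1eq]
  have hIint : IntegrableOn a1 (Set.Ioi (0:ℝ)) := by rwa [ha1eq] at hαν
  have hInn : 0 ≤ I := by
    rw [hIa1]; exact setIntegral_nonneg measurableSet_Ioi fun ξ _ => ha1nn ξ
  set A : ℝ → ℝ := fun t => ∫ ξ in (0:ℝ)..t, a1 ξ with hAdef
  have hAcont : Continuous A := intervalIntegral.continuous_primitive hiia1 0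
  have hA0 : A 0 = 0 := intervalIntegral.integral_same
  have hAle : ∀ t, A t ≤ I := by
    intro t
    rcases le_or_gt 0 t with ht | ht
    · rw [hAdef]
      simp only []
      rw [intervalIntegral.integral_of_le ht, hIa1]
      apply setIntegral_mono_set hIint
      · exact Filter.Eventually.of_forall fun ξ => ha1nn ξ
      · exact HasSubset.Subset.eventuallyLE Ioc_subset_Ioi_self
    · have h1 : A t ≤ 0 := by
        rw [hAdef]
        simp only []
        rw [intervalIntegral.integral_symm]
        simp only [neg_nonpos]
        apply intervalIntegral.integral_nonneg ht.le fun ξ _ => ha1nn ξ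
      linarith
  have hg00 : 0 ≤ g 0 := hg0 0 le_rfl
  have hgω : 0 < g 0 + ω := by linarith
  have hgc : Continuous g := hgdiff.continuous
  have hgpc : Continuous fun ξ => g ξ ^ p := by
    apply continuous_iff_continuousAt.2
    intro ξ
    exact (Real.continuousAt_rpow_const (g ξ) p (Or.inr hppos.le)).comp hgc.continuousAt
  -- exp identity
  have hEid : ∀ s t : ℝ, s ≤ t → E t = E s + ∫ ξ in s..t, E ξ * γ ξ := by
    intro s t hst
    have := ftc_chain (u := γ) (U := F) hst (hγ.integrableOn_isCompact isCompact_Icc)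
      (fun x _ => by
        rw [hFdef]
        simp only []
        rw [← intervalIntegral.integral_add_adjacent_intervals (hiiγ 0 s) (hiiγ s x)])
      isOpen_univ (fun x _ => Real.hasDerivAt_exp x) Real.continuous_exp.continuousOn
      (fun x _ => trivial)
    simpa using this
  -- g integral inequality
  have hgineq : ∀ s t : ℝ, 0 ≤ s → s ≤ t →
      g t - g s ≤ ∫ ξ in s..t, (γ ξ * g ξ + α ξ * g ξ ^ p + β ξ) := by
    intro s t hs hst
    apply intervalIntegral.sub_le_integral_of_hasDeriv_right_of_le hst hgc.continuousOn
      (g' := deriv g) (fun x _ => (hgdiff x).hasDerivAt.hasDerivWithinAt)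
    · exact (((hγ.integrableOn_isCompact isCompact_Icc).mul_continuousOn hgc.continuousOn
        isCompact_Icc).add ((hα.integrableOn_isCompact isCompact_Icc).mul_continuousOn
        hgpc.continuousOn isCompact_Icc)).add (hβ.integrableOn_isCompact isCompact_Icc)
    · exact fun x hx => hineq x (hs.trans hx.1.le)
  -- h and its integral inequality
  set h : ℝ → ℝ := fun t => g t + ω * E t with hhdef
  have hhc : Continuous h := hgc.add (continuous_const.mul hEcont)
  have hhnn : ∀ ξ, 0 ≤ ξ → 0 ≤ h ξ := fun ξ hξ =>
    add_nonneg (hg0 ξ hξ) (mul_nonneg hω.le (hEpos ξ).le)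
  have hhpc : Continuous fun ξ => h ξ ^ p := by
    apply continuous_iff_continuousAt.2
    intro ξ
    exact (Real.continuousAt_rpow_const (h ξ) p (Or.inr hppos.le)).comp hhc.continuousAt
  have hiih1 : ∀ s t : ℝ, IntervalIntegrable (fun ξ => γ ξ * h ξ + α ξ * h ξ ^ p) volume s t := by
    intro s t
    have h1 : IntervalIntegrable (fun ξ => γ ξ * h ξ) volume s t := my_ii_mul_cont hγ hhc s t
    have h2 : IntervalIntegrable (fun ξ => α ξ * h ξ ^ p) volume s t := my_ii_mul_cont hα hhpc s t
    exact h1.add h2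
  have H1 : ∀ s t : ℝ, 0 ≤ s → s ≤ t →
      h t - h s ≤ ∫ ξ in s..t, (γ ξ * h ξ + α ξ * h ξ ^ p) := by
    intro s t hs hst
    have e1 := hgineq s t hs hst
    have e2 := hEid s t hst
    have int1 : IntervalIntegrable (fun ξ => γ ξ * g ξ + α ξ * g ξ ^ p + β ξ) volume s t :=
      ((my_ii_mul_cont hγ hgc s t).add (my_ii_mul_cont hα hgpc s t)).add (my_ii hβ s t)
    have int2 : IntervalIntegrable (fun ξ => E ξ * γ ξ) volume s t := by
      have := my_ii_mul_cont hγ hEcont s t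
      simpa [mul_comm] using this
    have e3 : h t - h s ≤
        ∫ ξ in s..t, ((γ ξ * g ξ + α ξ * g ξ ^ p + β ξ) + ω * (E ξ * γ ξ)) := by
      rw [intervalIntegral.integral_add int1 (int2.const_mul ω),
        intervalIntegral.integral_const_mul]
      have : h t - h s = (g t - g s) + ω * (E t - E s) := by rw [hhdef]; ring
      rw [this]
      have e4 : ω * (E t - E s) = ω * ∫ ξ in s..t, E ξ * γ ξ := by rw [e2]; ring
      linarith [e1, e4.le, e4.ge]
    refine e3.trans (intervalIntegral.integral_mono_on hst
      (int1.add (int2.const_mul ω)) (hiih1 s t) ?_)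
    intro ξ hξ
    have hξ0 : 0 ≤ ξ := hs.trans hξ.1
    have hgξ := hg0 ξ hξ0
    have hβξ : β ξ ≤ α ξ * (ω * E ξ) ^ p := by
      have h1 := hsmall ξ hξ0
      have h2 : ν ξ ^ p = Real.exp (-F ξ * p) := by rw [hν ξ, hexp_rpow]
      have h3 : (ω * E ξ) ^ p = ω ^ p * Real.exp (F ξ * p) := by
        rw [Real.mul_rpow hω.le (hEpos ξ).le, hEdef]
        simp only []
        rw [hexp_rpow]
      rw [h3]
      have h4 : 0 < Real.exp (F ξ * p) := Real.exp_pos _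
      have h5 : β ξ * Real.exp (-F ξ * p) ≤ ω ^ p * α ξ := by rwa [h2] at h1
      have h6 : β ξ = β ξ * Real.exp (-F ξ * p) * Real.exp (F ξ * p) := by
        rw [mul_assoc, ← Real.exp_add]
        simp
      rw [h6]
      calc β ξ * Real.exp (-F ξ * p) * Real.exp (F ξ * p)
          ≤ ω ^ p * α ξ * Real.exp (F ξ * p) := by
            apply mul_le_mul_of_nonneg_right h5 h4.le
        _ = α ξ * (ω ^ p * Real.exp (F ξ * p)) := by ring
    have hrp : g ξ ^ p + (ω * E ξ) ^ p ≤ h ξ ^ p :=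
      my_add_rpow hgξ (mul_nonneg hω.le (hEpos ξ).le) hp.le
    have hαξ := hαpos ξ
    have hmain : α ξ * g ξ ^ p + β ξ ≤ α ξ * h ξ ^ p := by
      calc α ξ * g ξ ^ p + β ξ ≤ α ξ * g ξ ^ p + α ξ * (ω * E ξ) ^ p := by linarith
        _ = α ξ * (g ξ ^ p + (ω * E ξ) ^ p) := by ring
        _ ≤ α ξ * h ξ ^ p := mul_le_mul_of_nonneg_left hrp hαξ
    have hγh : γ ξ * g ξ + ω * (E ξ * γ ξ) = γ ξ * h ξ := by rw [hhdef]; ring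
    linarith
  -- main delta-parametrized comparison
  have main : ∀ δ : ℝ, 0 < δ → (p - 1) * I < (g 0 + ω + δ) ^ (1 - p) → ∀ t, 0 ≤ t →
      g t + ω * E t ≤
        Real.exp (-Real.log ((g 0 + ω + δ) ^ (1 - p) - (p - 1) * I) / (p - 1)) * E t := by
    intro δ hδ hδinit
    set q0 : ℝ := g 0 + ω + δ with hq0def
    have hq0pos : 0 < q0 := by positivity
    set c : ℝ := q0 ^ (1 - p) with hcdef
    have hcpos : 0 < c := Real.rpow_pos_of_pos hq0pos _
    set b1 : ℝ := c - (p - 1) * I with hb1def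
    have hb1pos : 0 < b1 := by rw [hb1def, hcdef]; linarith [hδinit]
    set B : ℝ → ℝ := fun t => c - (p - 1) * A t with hBdef
    have hBc : Continuous B := continuous_const.sub (continuous_const.mul hAcont)
    have hBge : ∀ t, b1 ≤ B t := by
      intro t
      rw [hBdef, hb1def]
      simp only []
      have := hAle t
      nlinarith [hp1]
    have hBpos : ∀ t, 0 < B t := fun t => lt_of_lt_of_le hb1pos (hBge t)
    have hB0 : B 0 = c := by rw [hBdef]; simp [hA0]
    set m : ℝ → ℝ := fun ξ => γ ξ + (B ξ)⁻¹ * a1 ξ with hmdef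
    have hBinvc : Continuous fun ξ => (B ξ)⁻¹ := hBc.inv₀ fun ξ => (hBpos ξ).ne'
    have hLIa1 : LocallyIntegrable a1 :=
      my_li_mul_cont hα (Real.continuous_exp.comp (continuous_const.mul hFcont))
    have hswap : (fun ξ => (B ξ)⁻¹ * a1 ξ) = fun ξ => a1 ξ * (B ξ)⁻¹ := by
      funext ξ; ring
    have hiiBa1 : ∀ a b : ℝ, IntervalIntegrable (fun ξ => (B ξ)⁻¹ * a1 ξ) volume a b := by
      intro a b
      rw [hswap]
      exact my_ii_mul_cont hLIa1 hBinvc a b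
    have hiim : ∀ a b : ℝ, IntervalIntegrable m volume a b := fun a b =>
      (hiiγ a b).add (hiiBa1 a b)
    set M : ℝ → ℝ := fun t => ∫ ξ in (0:ℝ)..t, m ξ with hMdef
    have hMcont : Continuous M := intervalIntegral.continuous_primitive hiim 0
    set Q : ℝ → ℝ := fun t => q0 * Real.exp (M t) with hQdef
    have hQc : Continuous Q := continuous_const.mul (Real.continuous_exp.comp hMcont)
    have hQpos : ∀ t, 0 < Q t := fun t => mul_pos hq0pos (Real.exp_pos _)
    -- log identity
    have hlog : ∀ t, 0 ≤ t →
        ∫ ξ in (0:ℝ)..t, (B ξ)⁻¹ * a1 ξ = (Real.log c - Real.log (B t)) / (p - 1) := by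
      intro t ht
      have happ := ftc_chain (u := a1) (U := A) ht
        (hLIa1.integrableOn_isCompact isCompact_Icc)
        (fun x _ => by
          rw [hAdef]
          simp only [intervalIntegral.integral_same]  -- A 0 = 0? careful A a with a = 0
          rw [← intervalIntegral.integral_add_adjacent_intervals (hiia1 0 0) (hiia1 0 x)]
          simp)
        (O := {y : ℝ | 0 < c - (p - 1) * y})
        (isOpen_Ioi.preimage (continuous_const.sub (continuous_const.mul continuous_id)))
        (Φ := fun y => -Real.log (c - (p - 1) * y) / (p - 1))
        (Φ' := fun y => (c - (p - 1) * y)⁻¹)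
        (fun x hx => by
          have hx' : 0 < c - (p - 1) * x := hx
          have h1 : HasDerivAt (fun y : ℝ => c - (p - 1) * y) (-(p - 1)) x := by
            simpa using ((hasDerivAt_id x).const_mul (p - 1)).const_sub c
          have h2 := (Real.hasDerivAt_log hx'.ne').comp x h1
          have h3 := (h2.neg).div_const (p - 1)
          refine h3.congr_deriv ?_
          show -((c - (p - 1) * x)⁻¹ * -(p - 1)) / (p - 1) = (c - (p - 1) * x)⁻¹
          field_simp)
        (by
          apply ContinuousOn.inv₀
          · exact (continuous_const.sub (continuous_const.mul continuous_id)).continuousOn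
          · exact fun x hx => (show (0:ℝ) < c - (p - 1) * x from hx).ne')
        (fun x _ => by
          show (0:ℝ) < c - (p - 1) * A x
          have := hBge x
          rw [hBdef] at this
          simp only [] at this
          linarith)
      -- happ : Φ (A t) = Φ (A 0) + ∫ ξ in 0..t, (c - (p-1) * A ξ)⁻¹ * a1 ξ
      rw [hA0] at happ
      have hBA : ∀ ξ : ℝ, (c - (p - 1) * A ξ)⁻¹ = (B ξ)⁻¹ := fun ξ => by rw [hBdef]
      simp only [hBA] at happ
      rw [show -Real.log (c - (p - 1) * A t) / (p - 1) = -Real.log (B t) / (p - 1) from by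
        rw [hBdef]] at happ
      rw [show c - (p - 1) * (0:ℝ) = c from by ring] at happ
      have : ∫ ξ in (0:ℝ)..t, (B ξ)⁻¹ * a1 ξ
          = -Real.log (B t) / (p - 1) - -Real.log c / (p - 1) := by linarith [happ]
      rw [this]
      ring
    have hMeq : ∀ t, 0 ≤ t → M t = F t + (Real.log c - Real.log (B t)) / (p - 1) := by
      intro t ht
      rw [hMdef]
      simp only []
      rw [hmdef]
      simp only []
      rw [intervalIntegral.integral_add (hiiγ 0 t) (hiiBa1 0 t), hlog t ht]
    -- closed form for Q
    have hlogc : Real.log c = (1 - p) * Real.log q0 := by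
      rw [hcdef, Real.log_rpow hq0pos]
    have hQx : ∀ t, 0 ≤ t → Q t = Real.exp (F t) * Real.exp (-Real.log (B t) / (p - 1)) := by
      intro t ht
      have e2 : q0 * Real.exp (Real.log c / (p - 1)) = 1 := by
        rw [hlogc, show (1 - p) * Real.log q0 / (p - 1) = -Real.log q0 from by
          rw [div_eq_iff hp1.ne']; ring]
        rw [Real.exp_neg, Real.exp_log hq0pos, mul_inv_cancel₀ hq0pos.ne']
      have e1 : F t + (Real.log c - Real.log (B t)) / (p - 1)
          = Real.log c / (p - 1) + (F t + -Real.log (B t) / (p - 1)) := by ring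
      rw [hQdef]
      simp only []
      rw [hMeq t ht, e1, Real.exp_add, Real.exp_add, ← mul_assoc, e2, one_mul]
    -- pointwise ODE identity for Q
    have hQode : ∀ ξ, 0 ≤ ξ → Q ξ * ((B ξ)⁻¹ * a1 ξ) = α ξ * Q ξ ^ p := by
      intro ξ hξ
      set L : ℝ := Real.log (B ξ) with hLdef
      have hQe : Q ξ = Real.exp (F ξ - L / (p - 1)) := by
        rw [hQx ξ hξ, ← Real.exp_add]
        congr 1
        ring
      have hQp : Q ξ ^ p = Real.exp (p * (F ξ - L / (p - 1))) := by
        rw [hQe, hexp_rpow]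
        congr 1
        ring
      have hBinv : (B ξ)⁻¹ = Real.exp (-L) := by
        rw [hLdef, Real.exp_neg, Real.exp_log (hBpos ξ)]
      rw [hQp, hQe, hBinv, ha1def]
      simp only []
      calc Real.exp (F ξ - L / (p - 1)) * (Real.exp (-L) * (α ξ * Real.exp ((p - 1) * F ξ)))
          = α ξ * Real.exp ((F ξ - L / (p - 1)) + -L + (p - 1) * F ξ) := by
            rw [Real.exp_add, Real.exp_add]
            ring
        _ = α ξ * Real.exp (p * (F ξ - L / (p - 1))) := by
            congr 1
            exact Real.exp_eq_exp.2 (by field_simp; ring)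
    -- integral identity for Q
    have H2 : ∀ s t : ℝ, 0 ≤ s → s ≤ t →
        Q t - Q s = ∫ ξ in s..t, (γ ξ * Q ξ + α ξ * Q ξ ^ p) := by
      intro s t hs hst
      have hintm : IntegrableOn m (Icc s t) := by
        have h1 : IntegrableOn γ (Icc s t) := hγ.integrableOn_isCompact isCompact_Icc
        have h2 : IntegrableOn (fun ξ => (B ξ)⁻¹ * a1 ξ) (Icc s t) :=
          IntegrableOn.continuousOn_mul hBinvc.continuousOn
            (hLIa1.integrableOn_isCompact isCompact_Icc) isCompact_Icc
        exact h1.add h2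
      have happ := ftc_chain (u := m) (U := M) hst hintm
        (fun x _ => by
          rw [hMdef]
          simp only []
          rw [← intervalIntegral.integral_add_adjacent_intervals (hiim 0 s) (hiim s x)])
        isOpen_univ (fun x _ => Real.hasDerivAt_exp x) Real.continuous_exp.continuousOn
        (fun x _ => trivial)
      have e5 : ∫ ξ in s..t, (γ ξ * Q ξ + α ξ * Q ξ ^ p)
          = ∫ ξ in s..t, Real.exp (M ξ) * m ξ * q0 := by
        apply intervalIntegral.integral_congr
        intro ξ hξ
        rw [uIcc_of_le hst] at hξ
        have hξ0 : 0 ≤ ξ := hs.trans hξ.1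
        have hQQ : q0 * Real.exp (M ξ) = Q ξ := by rw [hQdef]
        show γ ξ * Q ξ + α ξ * Q ξ ^ p = Real.exp (M ξ) * m ξ * q0
        rw [hmdef]
        simp only []
        calc γ ξ * Q ξ + α ξ * Q ξ ^ p
            = γ ξ * Q ξ + Q ξ * ((B ξ)⁻¹ * a1 ξ) := by rw [hQode ξ hξ0]
          _ = (q0 * Real.exp (M ξ)) * γ ξ + (q0 * Real.exp (M ξ)) * ((B ξ)⁻¹ * a1 ξ) := by
              rw [hQQ]; ring
          _ = Real.exp (M ξ) * (γ ξ + (B ξ)⁻¹ * a1 ξ) * q0 := by ring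
      rw [e5]
      have e6 : ∫ ξ in s..t, Real.exp (M ξ) * m ξ * q0
          = (∫ ξ in s..t, Real.exp (M ξ) * m ξ) * q0 := by
        rw [intervalIntegral.integral_mul_const]
      rw [e6, hQdef]
      simp only []
      have : ∫ ξ in s..t, Real.exp (M ξ) * m ξ = Real.exp (M t) - Real.exp (M s) := by
        linarith [happ]
      rw [this]
      ring
    -- Q bound
    have hQbound : ∀ t, 0 ≤ t → Q t ≤ Real.exp (-Real.log b1 / (p - 1)) * E t := by
      intro t ht
      rw [hQx t ht, hEdef]
      simp only []
      rw [mul_comm]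
      apply mul_le_mul_of_nonneg_right _ (Real.exp_pos _).le
      apply Real.exp_le_exp.2
      have hll : Real.log b1 ≤ Real.log (B t) := Real.log_le_log hb1pos (hBge t)
      have hneg : -Real.log (B t) ≤ -Real.log b1 := by linarith
      exact (div_le_div_iff_of_pos_right hp1).2 hneg
    -- comparison h ≤ Q on [0, ∞)
    have hcomp : ∀ t, 0 ≤ t → h t ≤ Q t := by
      by_contra hcon
      push_neg at hcon
      obtain ⟨T, hT0, hTlt⟩ := hcon
      set S : Set ℝ := {t : ℝ | 0 ≤ t ∧ 0 ≤ h t - Q t} with hSdef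
      have hSclosed : IsClosed S := by
        apply IsClosed.inter
        · exact isClosed_Ici.preimage continuous_id
        · exact isClosed_le continuous_const (hhc.sub hQc)
      have hSne : S.Nonempty := ⟨T, hT0, by linarith⟩
      have hSbdd : BddBelow S := ⟨0, fun x hx => hx.1⟩
      set ts : ℝ := sInf S with htsdef
      have htsS : ts ∈ S := hSclosed.csInf_mem hSne hSbdd
      have hts0 : 0 ≤ ts := htsS.1
      have hφ0 : h 0 - Q 0 = -δ := by
        rw [hhdef, hQdef]
        simp only []
        rw [hMdef]
        simp only [intervalIntegral.integral_same, Real.exp_zero]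
        rw [hEdef]
        simp only []
        rw [hFdef]
        simp only [intervalIntegral.integral_same, Real.exp_zero]
        rw [hq0def]
        ring
      have htspos : 0 < ts := by
        rcases eq_or_lt_of_le hts0 with heq | hlt
        · exfalso
          have := htsS.2
          rw [← heq] at this
          rw [hφ0] at this
          linarith
        · exact hlt
      have hbefore : ∀ ξ, 0 ≤ ξ → ξ < ts → h ξ - Q ξ < 0 := by
        intro ξ hξ0 hξlt
        by_contra hc
        push_neg at hc
        have : ξ ∈ S := ⟨hξ0, hc⟩
        have := csInf_le hSbdd this
        rw [← htsdef] at this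
        linarith
      have hEq0 : h ts - Q ts = 0 := by
        refine le_antisymm ?_ htsS.2
        have htd : Tendsto (fun ξ => h ξ - Q ξ) (𝓝[<] ts) (𝓝 (h ts - Q ts)) :=
          ((hhc.sub hQc).continuousAt).tendsto.mono_left nhdsWithin_le_nhds
        apply le_of_tendsto htd
        have hmem : Set.Ioo (0:ℝ) ts ∈ 𝓝[<] ts :=
          Ioo_mem_nhdsLT_of_mem ⟨htspos, le_rfl⟩
        filter_upwards [hmem] with ξ hξ
        exact (hbefore ξ hξ.1.le hξ.2).le
      have hle_ts : ∀ ξ, 0 ≤ ξ → ξ ≤ ts → h ξ ≤ Q ξ := by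
        intro ξ hξ0 hξle
        rcases eq_or_lt_of_le hξle with heq | hlt
        · rw [heq]; linarith [hEq0]
        · linarith [hbefore ξ hξ0 hlt]
      set D : ℝ → ℝ := fun ξ => Q ξ - h ξ with hDdef
      have hDc : Continuous D := hQc.sub hhc
      have hiiD : ∀ a b : ℝ, IntervalIntegrable (fun ξ => |γ ξ| * D ξ) volume a b := by
        intro a b
        have h1 : LocallyIntegrable (fun ξ => |γ ξ|) := by
          intro x
          obtain ⟨s, hs, hint⟩ := hγ x
          exact ⟨s, hs, by simpa [IntegrableOn, Real.norm_eq_abs] using hint.norm⟩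
        exact my_ii_mul_cont h1 hDc a b
      have key : ∀ s, 0 ≤ s → s ≤ ts → D s ≤ ∫ ξ in s..ts, |γ ξ| * D ξ := by
        intro s hs hst
        have h1 := H1 s ts hs hst
        have h2 := H2 s ts hs hst
        have h3 : D s ≤ (∫ ξ in s..ts, (γ ξ * h ξ + α ξ * h ξ ^ p))
            - ∫ ξ in s..ts, (γ ξ * Q ξ + α ξ * Q ξ ^ p) := by
          rw [hDdef]
          simp only []
          linarith [hEq0]
        have hiiQ1 : IntervalIntegrable (fun ξ => γ ξ * Q ξ + α ξ * Q ξ ^ p) volume s ts := by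
          have hQpc : Continuous fun ξ => Q ξ ^ p := by
            apply continuous_iff_continuousAt.2
            intro ξ
            exact (Real.continuousAt_rpow_const (Q ξ) p (Or.inr hppos.le)).comp hQc.continuousAt
          exact (my_ii_mul_cont hγ hQc s ts).add (my_ii_mul_cont hα hQpc s ts)
        have h4 : (∫ ξ in s..ts, (γ ξ * h ξ + α ξ * h ξ ^ p))
            - (∫ ξ in s..ts, (γ ξ * Q ξ + α ξ * Q ξ ^ p))
            = ∫ ξ in s..ts, ((γ ξ * h ξ + α ξ * h ξ ^ p) - (γ ξ * Q ξ + α ξ * Q ξ ^ p)) := by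
          rw [intervalIntegral.integral_sub (hiih1 s ts) hiiQ1]
        have h5 : ∫ ξ in s..ts, ((γ ξ * h ξ + α ξ * h ξ ^ p) - (γ ξ * Q ξ + α ξ * Q ξ ^ p))
            ≤ ∫ ξ in s..ts, |γ ξ| * D ξ := by
          apply intervalIntegral.integral_mono_on hst ((hiih1 s ts).sub hiiQ1) (hiiD s ts)
          intro ξ hξ
          have hξ0 : 0 ≤ ξ := hs.trans hξ.1
          have hhQ : h ξ ≤ Q ξ := hle_ts ξ hξ0 (hξ.2)
          have hrle : h ξ ^ p ≤ Q ξ ^ p :=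
            Real.rpow_le_rpow (hhnn ξ hξ0) hhQ hppos.le
          have hαle : α ξ * h ξ ^ p - α ξ * Q ξ ^ p ≤ 0 := by
            have := mul_le_mul_of_nonneg_left hrle (hαpos ξ)
            linarith
          have hγle : γ ξ * h ξ - γ ξ * Q ξ ≤ |γ ξ| * D ξ := by
            have e : γ ξ * h ξ - γ ξ * Q ξ = -(γ ξ * D ξ) := by rw [hDdef]; ring
            rw [e]
            have h6 : -(γ ξ * D ξ) ≤ |γ ξ * D ξ| := neg_le_abs _
            have h7 : |γ ξ * D ξ| = |γ ξ| * |D ξ| := abs_mul _ _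
            have h8 : |D ξ| = D ξ := abs_of_nonneg (by rw [hDdef]; simp only []; linarith)
            rw [h7, h8] at h6
            exact h6
          linarith
        linarith [h3, h4.le, h4.ge, h5]
      -- pick s₀ close to ts with small |γ|-integral
      have hGprim : Continuous fun s => ∫ ξ in (0:ℝ)..s, |γ ξ| :=
        intervalIntegral.continuous_primitive (fun a b => (hiiγ a b).abs) 0
      have hGsplit : ∀ s : ℝ, ∫ ξ in s..ts, |γ ξ|
          = (∫ ξ in (0:ℝ)..ts, |γ ξ|) - ∫ ξ in (0:ℝ)..s, |γ ξ| := by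
        intro s
        rw [eq_sub_iff_add_eq, add_comm]
        exact intervalIntegral.integral_add_adjacent_intervals ((hiiγ 0 s).abs) ((hiiγ s ts).abs)
      have hGcont : Continuous fun s => ∫ ξ in s..ts, |γ ξ| := by
        have he : (fun s => ∫ ξ in s..ts, |γ ξ|)
            = fun s => (∫ ξ in (0:ℝ)..ts, |γ ξ|) - ∫ ξ in (0:ℝ)..s, |γ ξ| := funext hGsplit
        rw [he]
        exact continuous_const.sub hGprim
      have htd : Tendsto (fun s => ∫ ξ in s..ts, |γ ξ|) (𝓝[<] ts) (𝓝 0) := by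
        have h0 := hGcont.tendsto ts
        simp only [intervalIntegral.integral_same] at h0
        exact h0.mono_left nhdsWithin_le_nhds
      have hev : ∀ᶠ s in 𝓝[<] ts, (∫ ξ in s..ts, |γ ξ|) < 1/2 :=
        htd (Iio_mem_nhds (by norm_num : (0:ℝ) < 1/2))
      have hmem2 : Set.Ioo (0:ℝ) ts ∈ 𝓝[<] ts := Ioo_mem_nhdsLT_of_mem ⟨htspos, le_rfl⟩
      obtain ⟨s₀, hs₀G, hs₀mem⟩ := (hev.and hmem2).exists
      have hs₀0 : 0 ≤ s₀ := hs₀mem.1.le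
      have hs₀lt : s₀ < ts := hs₀mem.2
      obtain ⟨x₀, hx₀mem, hx₀max⟩ := isCompact_Icc.exists_isMaxOn
        (Set.nonempty_Icc.2 hs₀lt.le) hDc.continuousOn
      have hx₀0 : 0 ≤ x₀ := hs₀0.trans hx₀mem.1
      have hDs₀pos : 0 < D s₀ := by
        rw [hDdef]
        simp only []
        linarith [hbefore s₀ hs₀0 hs₀lt]
      have hNpos : 0 < D x₀ :=
        lt_of_lt_of_le hDs₀pos (hx₀max ⟨le_rfl, hs₀lt.le⟩)
      have hk1 := key x₀ hx₀0 hx₀mem.2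
      have hk2 : ∫ ξ in x₀..ts, |γ ξ| * D ξ ≤ ∫ ξ in x₀..ts, |γ ξ| * D x₀ := by
        apply intervalIntegral.integral_mono_on hx₀mem.2 (hiiD x₀ ts)
          (((hiiγ x₀ ts).abs).mul_const (D x₀))
        intro ξ hξ
        have hξmem : ξ ∈ Set.Icc s₀ ts := ⟨hx₀mem.1.trans hξ.1, hξ.2⟩
        exact mul_le_mul_of_nonneg_left (hx₀max hξmem) (abs_nonneg _)
      have hk3 : ∫ ξ in x₀..ts, |γ ξ| * D x₀ = (∫ ξ in x₀..ts, |γ ξ|) * D x₀ :=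
        intervalIntegral.integral_mul_const _ _
      have hk4 : (∫ ξ in x₀..ts, |γ ξ|) ≤ ∫ ξ in s₀..ts, |γ ξ| := by
        have hsplit : (∫ ξ in s₀..x₀, |γ ξ|) + ∫ ξ in x₀..ts, |γ ξ| = ∫ ξ in s₀..ts, |γ ξ| :=
          intervalIntegral.integral_add_adjacent_intervals ((hiiγ s₀ x₀).abs) ((hiiγ x₀ ts).abs)
        have hnn : 0 ≤ ∫ ξ in s₀..x₀, |γ ξ| :=
          intervalIntegral.integral_nonneg hx₀mem.1 fun ξ _ => abs_nonneg _
        linarith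
      have hk5 : (∫ ξ in x₀..ts, |γ ξ|) * D x₀ ≤ (1/2) * D x₀ := by
        apply mul_le_mul_of_nonneg_right _ hNpos.le
        exact hk4.trans hs₀G.le
      have hfin : D x₀ ≤ 1/2 * D x₀ :=
        hk1.trans (hk2.trans (hk3.le.trans hk5))
      have h10 := hNpos
      generalize hy : D x₀ = y at hfin h10
      linarith
    -- conclude main
    intro t ht
    have := hcomp t ht
    have hQb := hQbound t ht
    rw [hhdef] at this
    simp only [] at this
    rw [hb1def, hcdef, hq0def] at hQb
    calc g t + ω * E t ≤ Q t := this
      _ ≤ Real.exp (-Real.log ((g 0 + ω + δ) ^ (1 - p) - (p - 1) * I) / (p - 1)) * E t := hQb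
  -- limit δ → 0 and conclusion
  set z : ℝ := (g 0 + ω) ^ (1 - p) - (p - 1) * I with hzdef
  have hzpos : 0 < z := by rw [hzdef]; linarith [hinit]
  have part1 : ∀ t, 0 ≤ t →
      g t ≤ ((1 / z) ^ (1 / (p - 1)) - ω) * Real.exp (F t) := by
    intro t ht
    set Ψ : ℝ → ℝ := fun δ =>
      Real.exp (-Real.log ((g 0 + ω + δ) ^ (1 - p) - (p - 1) * I) / (p - 1)) * Real.exp (F t)
      with hΨdef
    have hbasec : ContinuousAt (fun δ : ℝ => (g 0 + ω + δ) ^ (1 - p) - (p - 1) * I) 0 := by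
      apply ContinuousAt.sub _ continuousAt_const
      exact (Real.continuousAt_rpow_const (g 0 + ω + 0) (1 - p)
        (Or.inl (by linarith))).comp (continuous_const.add continuous_id).continuousAt
    have hbase0 : (g 0 + ω + 0) ^ (1 - p) - (p - 1) * I = z := by
      rw [add_zero, hzdef]
    have hΨc : ContinuousAt Ψ 0 := by
      apply ContinuousAt.mul _ continuousAt_const
      apply Real.continuous_exp.continuousAt.comp
      apply ContinuousAt.div_const
      apply ContinuousAt.neg
      apply ContinuousAt.log hbasec
      rw [hbase0]
      exact hzpos.ne'
    have hev1 : ∀ᶠ δ in 𝓝[>] (0:ℝ), (p - 1) * I < (g 0 + ω + δ) ^ (1 - p) := by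
      have htt : Tendsto (fun δ : ℝ => (g 0 + ω + δ) ^ (1 - p)) (𝓝[>] 0)
          (𝓝 ((g 0 + ω + 0) ^ (1 - p))) := by
        apply ContinuousAt.tendsto ?_ |>.mono_left nhdsWithin_le_nhds
        exact (Real.continuousAt_rpow_const (g 0 + ω + 0) (1 - p)
          (Or.inl (by linarith))).comp (continuous_const.add continuous_id).continuousAt
      apply htt
      apply Ioi_mem_nhds
      have h6 : (g 0 + ω + 0) ^ (1 - p) = z + (p - 1) * I := by rw [← hbase0]; ring
      rw [h6]
      linarith
    have hev2 : ∀ᶠ δ in 𝓝[>] (0:ℝ), g t + ω * Real.exp (F t) ≤ Ψ δ := by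
      filter_upwards [hev1, self_mem_nhdsWithin] with δ h1 h2
      exact main δ h2 h1 t ht
    have hlim : Tendsto Ψ (𝓝[>] (0:ℝ)) (𝓝 (Ψ 0)) :=
      hΨc.tendsto.mono_left nhdsWithin_le_nhds
    have hfinal : g t + ω * Real.exp (F t) ≤ Ψ 0 := ge_of_tendsto hlim hev2
    have hΨ0 : Ψ 0 = (1 / z) ^ (1 / (p - 1)) * Real.exp (F t) := by
      rw [hΨdef]
      simp only []
      rw [hbase0]
      congr 1
      rw [Real.rpow_def_of_pos (by positivity : (0:ℝ) < 1 / z), one_div,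
        Real.log_inv]
      congr 1
      ring
    rw [hΨ0] at hfinal
    have hre : ((1 / z) ^ (1 / (p - 1)) - ω) * Real.exp (F t)
        = (1 / z) ^ (1 / (p - 1)) * Real.exp (F t) - ω * Real.exp (F t) := by ring
    rw [hre]
    linarith
  constructor
  · intro t ht
    exact part1 t ht
  · intro hγtend
    have hEtend : Tendsto (fun t => Real.exp (F t)) atTop (𝓝 0) :=
      Real.tendsto_exp_atBot.comp hγtend
    apply squeeze_zero' (Filter.eventually_atTop.2 ⟨0, fun t ht' => hg0 t ht'⟩)
      (Filter.eventually_atTop.2 ⟨0, fun t ht' => part1 t ht'⟩)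
    simpa using hEtend.const_mul ((1 / z) ^ (1 / (p - 1)) - ω)
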